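/- In the perception game with T = {ℓ, r}, A = {L, R}, uniform prior, and utility u(t, a, p) = 1_{t matches a} − 2·|p(ℓ) − 1/2|, the set of pure-strategy perception equilibrium outcomes consists exactly of: (i) both types pool on L, (ii) both types pool on R, and (iii) full separation (ℓ plays L, r plays R); in particular, the 'anti-truthful' separating profile where ℓ plays R and r plays L is not an equilibrium outcome. -/

import Mathlib

open Finset

section PerceptionGame
variable {T A : Type*} [Fintype T] [Fintype A]

/-- Total probability of action `a` under prior `β` and strategy `σ`. -/
def actProb (β : T → ℝ) (σ : T → A → ℝ) (a : A) : ℝ := ∑ t, β t * σ t a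

/-- Bayesian consistency of a perception with the prior and strategy. -/
def Consistent (β : T → ℝ) (σ : T → A → ℝ) (τ : T → A → T → ℝ) : Prop :=
  ∀ a, 0 < actProb β σ a → ∀ t tb, τ t a tb = β tb * σ tb a / actProb β σ a

/-- Expected utility of type `t` playing mixed action `s`, given perception `τ`. -/
def ExpUtil (u : T → A → (T → ℝ) → ℝ) (τ : T → A → T → ℝ) (t : T) (s : A → ℝ) : ℝ :=
  ∑ a, s a * u t a (τ t a)

/-- Perception equilibrium: a consistent strategy–perception pair where
every type's strategy is a best reply. -/
def PerceptionEqm (β : T → ℝ) (u : T → A → (T → ℝ) → ℝ)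
    (σ : T → A → ℝ) (τ : T → A → T → ℝ) : Prop :=
  (∀ t, σ t ∈ stdSimplex ℝ A) ∧ (∀ t a, τ t a ∈ stdSimplex ℝ T) ∧
  Consistent β σ τ ∧
  ∀ t, ∀ s ∈ stdSimplex ℝ A, ExpUtil u τ t s ≤ ExpUtil u τ t (σ t)

end PerceptionGame

/-- Alice's game: types `true = ℓ`, `false = r`; actions `true = L`, `false = R`;
uniform prior; utility = match indicator minus privacy penalty. -/
noncomputable def aliceU (t a : Bool) (p : Bool → ℝ) : ℝ :=
  (if t = a then 1 else 0) - 2 * |p true - 1/2|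

noncomputable def aliceβ : Bool → ℝ := fun _ => 1/2

lemma pure_mem (b : Bool) : (fun a => if a = b then (1:ℝ) else 0) ∈ stdSimplex ℝ Bool := by
  refine ⟨fun x => by dsimp only; split <;> norm_num, ?_⟩
  rw [Fintype.sum_bool]; cases b <;> simp

/-- pure-strategy perception equilibrium outcomes of Alice's game
are exactly pooling on L, pooling on R, and truthful separation; in particular
the anti-truthful profile is not an equilibrium outcome. -/
theorem alice_pure_equilibrium_outcomes (f : Bool → Bool) :
    (∃ τ : Bool → Bool → Bool → ℝ,
        PerceptionEqm aliceβ aliceU (fun t a => if a = f t then 1 else 0) τ) ↔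
      (∀ t, f t = true) ∨ (∀ t, f t = false) ∨ (∀ t, f t = t) := by
  constructor
  · rintro ⟨τ, hσ, hτ, hcons, hbr⟩
    cases hft : f true <;> cases hff : f false
    · right; left; intro t; cases t <;> assumption
    · -- anti-truthful : contradiction
      exfalso
      have hpos : (0:ℝ) < actProb aliceβ (fun t a => if a = f t then 1 else 0) true := by
        simp [actProb, aliceβ, Fintype.sum_bool, hft, hff]
      have hpos' : (0:ℝ) < actProb aliceβ (fun t a => if a = f t then 1 else 0) false := by
        simp [actProb, aliceβ, Fintype.sum_bool, hft, hff]
      have h1 := hcons true hpos true true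
      have h2 := hcons false hpos' true true
      simp [actProb, aliceβ, Fintype.sum_bool, hft, hff] at h1 h2
      have hbr' := hbr true (fun a => if a = true then 1 else 0) (pure_mem true)
      simp [ExpUtil, aliceU, Fintype.sum_bool, hft, h1, h2] at hbr'
      rw [show |(1:ℝ) - 2⁻¹| = 2⁻¹ by norm_num] at hbr'
      linarith
    · right; right; intro t; cases t <;> assumption
    · left; intro t; cases t <;> assumption
  · rintro (h | h | h)
    · -- pooling on L
      refine ⟨fun _ a tb => if a = true then 1/2 else (if tb = true then 1 else 0),
        fun t => pure_mem (f t), fun t a => ?_, ?_, ?_⟩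
      · refine ⟨fun x => by cases a <;> cases x <;> norm_num, ?_⟩
        rw [Fintype.sum_bool]; cases a <;> norm_num
      · intro a ha t tb
        cases a
        · simp [actProb, aliceβ, Fintype.sum_bool, h] at ha
        · simp only [actProb, aliceβ, Fintype.sum_bool, h]
          cases tb <;> norm_num
      · intro t s hs
        obtain ⟨hs1, hs2⟩ := hs
        rw [Fintype.sum_bool] at hs2
        have h1 := hs1 true
        have h2 := hs1 false
        simp only [ExpUtil, aliceU, Fintype.sum_bool, h, if_pos rfl]
        norm_num
        cases t <;> simp [show |(2:ℝ)⁻¹| = 2⁻¹ from by norm_num] <;> nlinarith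
    · -- pooling on R
      refine ⟨fun _ a tb => if a = false then 1/2 else (if tb = true then 1 else 0),
        fun t => pure_mem (f t), fun t a => ?_, ?_, ?_⟩
      · refine ⟨fun x => by cases a <;> cases x <;> norm_num, ?_⟩
        rw [Fintype.sum_bool]; cases a <;> norm_num
      · intro a ha t tb
        cases a
        · simp only [actProb, aliceβ, Fintype.sum_bool, h]
          cases tb <;> norm_num
        · simp [actProb, aliceβ, Fintype.sum_bool, h] at ha
      · intro t s hs
        obtain ⟨hs1, hs2⟩ := hs
        rw [Fintype.sum_bool] at hs2
        have h1 := hs1 true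
        have h2 := hs1 false
        simp only [ExpUtil, aliceU, Fintype.sum_bool, h, if_pos rfl]
        norm_num
        cases t <;> simp [show |(2:ℝ)⁻¹| = 2⁻¹ from by norm_num] <;> nlinarith
    · -- truthful separation
      refine ⟨fun _ a tb => if tb = a then 1 else 0,
        fun t => pure_mem (f t), fun t a => pure_mem a, ?_, ?_⟩
      · intro a ha t tb
        simp only [actProb, aliceβ, Fintype.sum_bool, h]
        cases a <;> cases tb <;> norm_num
      · intro t s hs
        obtain ⟨hs1, hs2⟩ := hs
        rw [Fintype.sum_bool] at hs2
        have h1 := hs1 true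
        have h2 := hs1 false
        simp only [ExpUtil, aliceU, Fintype.sum_bool, h, if_pos rfl]
        norm_num
        cases t <;> simp [show |(2:ℝ)⁻¹| = 2⁻¹ from by norm_num] <;> nlinarith
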